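/- arXiv:0903.0068 — 6 statements merged into one kernel-verified Lean document; each statement's English description precedes it below -/
import Mathlib

section
/- Let Λ be uncountable and for each λ ∈ Λ let G_λ be a finite subset of Λ with λ ∉ G_λ. Then for every n there exists a finite set F ⊆ Λ with |F| = n+1 such that for all distinct λ, μ ∈ F, λ ∉ G_μ. Consequently, the intersection of the basic neighborhoods Φ_{{λ}}^{G_λ} of the singletons {λ}, λ ∈ F, in σ_{n+1}(Λ) is nonempty (it contains F itself). -/
open Set

def sigmaSet (Γ : Type*) (n : ℕ) : Set (Γ → Bool) :=
  {x | {γ | x γ = true}.Finite ∧ {γ | x γ = true}.ncard ≤ n}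

-- key step: find λ0 ∈ S such that uncountably many λ ∈ S have λ0 ∉ G λ
lemma step {Λ : Type*} [DecidableEq Λ] (G : Λ → Finset Λ) (k : ℕ)
    (S : Set Λ) (hS : ¬ S.Countable) (hb : ∀ l ∈ S, (G l).card ≤ k) :
    ∃ l0 ∈ S, ¬ (S \ {l | l0 ∈ G l}).Countable := by
  by_contra h
  push_neg at h
  have hinf : S.Infinite := fun hf => hS hf.countable
  obtain ⟨T, hTS, hTcard⟩ := hinf.exists_subset_card_eq (k + 1)
  have hC : (⋃ l0 ∈ T, (S \ {l | l0 ∈ G l})).Countable := by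
    refine Set.Countable.biUnion T.countable_toSet (fun l0 hl0 => h l0 (hTS hl0))
  have : ¬ (S \ (⋃ l0 ∈ T, (S \ {l | l0 ∈ G l}))).Countable := by
    intro hc
    exact hS ((hc.union hC).mono (fun x hx => by
      by_cases hxu : x ∈ ⋃ l0 ∈ T, (S \ {l | l0 ∈ G l})
      · exact Or.inr hxu
      · exact Or.inl ⟨hx, hxu⟩))
  obtain ⟨l, hlS, hlnot⟩ : (S \ (⋃ l0 ∈ T, (S \ {l | l0 ∈ G l}))).Nonempty :=
    Set.nonempty_iff_ne_empty.mpr (fun he => this (he ▸ Set.countable_empty))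
  have hTG : T ⊆ G l := by
    intro l0 hl0
    by_contra hnot
    exact hlnot (Set.mem_biUnion hl0 ⟨hlS, hnot⟩)
  have h1 := Finset.card_le_card hTG
  have h2 := hb l hlS
  omega

lemma free_set {Λ : Type*} [DecidableEq Λ] (G : Λ → Finset Λ) (k : ℕ) (m : ℕ) :
    ∀ S : Set Λ, ¬ S.Countable → (∀ l ∈ S, (G l).card ≤ k) →
    ∃ F : Finset Λ, ↑F ⊆ S ∧ F.card = m ∧ ∀ l ∈ F, ∀ p ∈ F, l ≠ p → l ∉ G p := by
  induction m with
  | zero => exact fun S _ _ => ⟨∅, by simp⟩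
  | succ m ih =>
    intro S hS hb
    obtain ⟨l0, hl0S, hl0⟩ := step G k S hS hb
    set S' : Set Λ := (S \ {l | l0 ∈ G l}) \ (↑(G l0) ∪ {l0}) with hS'
    have hS'unc : ¬ S'.Countable := by
      intro hc
      exact hl0 ((hc.union ((G l0).countable_toSet.union (Set.countable_singleton l0))).mono
        (fun x hx => by
          by_cases hxu : x ∈ (↑(G l0) ∪ {l0} : Set Λ)
          · exact Or.inr hxu
          · exact Or.inl ⟨hx, hxu⟩))
    obtain ⟨F, hFS, hFcard, hFfree⟩ := ih S' hS'unc
      (fun l hl => hb l hl.1.1)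
    refine ⟨insert l0 F, ?_, ?_, ?_⟩
    · intro x hx
      rcases Finset.mem_insert.mp (by exact_mod_cast hx) with h | h
      · exact h ▸ hl0S
      · exact (hFS h).1.1
    · rw [Finset.card_insert_of_notMem, hFcard]
      intro hmem
      exact (hFS hmem).2 (Or.inr rfl)
    · intro l hl p hp hlp
      rcases Finset.mem_insert.mp hl with rfl | hlF
      · rcases Finset.mem_insert.mp hp with rfl | hpF
        · exact absurd rfl hlp
        · -- l0 ∉ G p, p ∈ F ⊆ S' ⊆ complement of {l | l0 ∈ G l}
          exact (hFS hpF).1.2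
      · rcases Finset.mem_insert.mp hp with rfl | hpF
        · -- l ∈ F ⊆ S', l ∉ G l0 since S' avoids G l0
          intro hmem
          exact (hFS hlF).2 (Or.inl hmem)
        · exact hFfree l hlF p hpF hlp

/-- Given an uncountable `Λ` and finite sets `G_λ ⊆ Λ` with `λ ∉ G_λ`, for every `n` there is
`F ⊆ Λ` with `|F| = n+1` such that `λ ∉ G_μ` for distinct `λ, μ ∈ F`; consequently the
characteristic function of `F` lies in `σ_{n+1}(Λ)` and in every `Φ_{{λ}}^{G_λ}`, `λ ∈ F`. -/
theorem stmt_5 (Λ : Type*) [Uncountable Λ] [DecidableEq Λ]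
    (G : Λ → Finset Λ) (hG : ∀ l, l ∉ G l) (n : ℕ) :
    ∃ F : Finset Λ, F.card = n + 1 ∧
      (∀ l ∈ F, ∀ m ∈ F, l ≠ m → l ∉ G m) ∧
      (fun γ => decide (γ ∈ F)) ∈ sigmaSet Λ (n + 1) ∧
      (∀ l ∈ F, decide (l ∈ F) = true ∧ ∀ γ ∈ G l, decide (γ ∈ F) = false) := by
  -- pigeonhole: some k with {l | (G l).card = k} uncountable
  have huniv : ¬ (Set.univ : Set Λ).Countable := fun h =>
    (not_countable (α := Λ)) (Set.countable_univ_iff.mp h)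
  have : ∃ k : ℕ, ¬ {l : Λ | (G l).card = k}.Countable := by
    by_contra h
    push_neg at h
    apply huniv
    have : (Set.univ : Set Λ) = ⋃ k : ℕ, {l : Λ | (G l).card = k} := by
      ext x; simp
    rw [this]
    exact Set.countable_iUnion h
  obtain ⟨k, hk⟩ := this
  obtain ⟨F, _, hFcard, hFfree⟩ := free_set G k (n + 1) _ hk (fun l hl => le_of_eq hl)
  refine ⟨F, hFcard, hFfree, ?_, ?_⟩
  · constructor
    · have : {γ : Λ | decide (γ ∈ F) = true} = ↑F := by ext x; simp
      rw [this]; exact F.finite_toSet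
    · have : {γ : Λ | decide (γ ∈ F) = true} = ↑F := by ext x; simp
      rw [this, Set.ncard_coe_finset, hFcard]
  · intro l hl
    refine ⟨by simp [hl], fun γ hγ => ?_⟩
    simp only [decide_eq_false_iff_not]
    intro hγF
    rcases eq_or_ne γ l with rfl | hne
    · exact hG γ hγ
    · exact hFfree γ hγF l hl hne hγ
end

section
/- For an uncountable set Λ and integers n ≥ 0, k ≥ 0, the space σ_{n+1}(Λ)^{k+1} does not embed topologically into σ_n(Γ)^ω × σ_{n+1}(Γ)^k. -/
namespace Stmt7

open Set Function

variable {Λ Γ : Type*} {n k : ℕ}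

/-- The domain space. -/
abbrev Dom (Λ : Type*) (n k : ℕ) := Fin (k + 1) → (sigmaSet Λ (n + 1))

/-- The codomain space. -/
abbrev Cod (Γ : Type*) (n k : ℕ) := (ℕ → (sigmaSet Γ n)) × (Fin k → (sigmaSet Γ (n + 1)))

/-- Evaluation of a point of the domain at a pair (factor, coordinate). -/
def dval (z : Dom Λ n k) (p : Fin (k + 1) × Λ) : Bool := (z p.1).1 p.2

/-- Evaluation of a point of the codomain at a coordinate of `ℕ ⊕ Fin k` and a point of `Γ`. -/
def yval (y : Cod Γ n k) : ℕ ⊕ Fin k → Γ → Bool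
  | Sum.inl m => fun γ => (y.1 m).1 γ
  | Sum.inr j => fun γ => (y.2 j).1 γ

@[simp] lemma yval_inl (y : Cod Γ n k) (m : ℕ) (γ : Γ) : yval y (Sum.inl m) γ = (y.1 m).1 γ := rfl
@[simp] lemma yval_inr (y : Cod Γ n k) (j : Fin k) (γ : Γ) : yval y (Sum.inr j) γ = (y.2 j).1 γ := rfl

lemma yval_ext {y y' : Cod Γ n k} (h : ∀ m γ, yval y m γ = yval y' m γ) : y = y' := by
  refine Prod.ext ?_ ?_
  · funext m; exact Subtype.ext (funext fun γ => h (Sum.inl m) γ)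
  · funext j; exact Subtype.ext (funext fun γ => h (Sum.inr j) γ)

lemma yval_supp_finite (y : Cod Γ n k) (m : ℕ ⊕ Fin k) :
    {γ | yval y m γ = true}.Finite := by
  cases m with
  | inl m => exact (y.1 m).2.1
  | inr j => exact (y.2 j).2.1

lemma yval_supp_ncard (y : Cod Γ n k) (m : ℕ ⊕ Fin k) :
    {γ | yval y m γ = true}.ncard ≤ n + 1 := by
  cases m with
  | inl m => exact le_trans (y.1 m).2.2 (Nat.le_succ n)
  | inr j => exact (y.2 j).2.2

lemma yval_supp_ncard_inl (y : Cod Γ n k) (m : ℕ) :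
    {γ | yval y (Sum.inl m) γ = true}.ncard ≤ n := (y.1 m).2.2

/-- A point of the domain given by a tuple of finite sets. -/
noncomputable def pt (g : Fin (k + 1) → Finset Λ) (hg : ∀ i, (g i).card ≤ n + 1) :
    Dom Λ n k := by
  classical
  exact fun i => ⟨fun μ => if μ ∈ g i then true else false, by
    have h : {γ : Λ | (if γ ∈ g i then true else false) = true} = ↑(g i) := by
      ext γ; by_cases h : γ ∈ g i <;> simp [h]
    constructor
    · rw [h]; exact (g i).finite_toSet
    · rw [h, Set.ncard_coe_finset]; exact hg i⟩

lemma dval_pt (g : Fin (k + 1) → Finset Λ) (hg : ∀ i, (g i).card ≤ n + 1)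
    (p : Fin (k + 1) × Λ) : dval (pt g hg) p = true ↔ p.2 ∈ g p.1 := by
  classical
  simp only [dval, pt]
  by_cases h : p.2 ∈ g p.1 <;> simp [h]

/-- The zero point of the domain. -/
noncomputable def zpt : Dom Λ n k := pt (fun _ => ∅) (fun _ => by simp)

lemma dval_zpt (p : Fin (k + 1) × Λ) : dval (zpt : Dom Λ n k) p = false := by
  have h := dval_pt (Λ := Λ) (n := n) (k := k) (fun _ => (∅ : Finset Λ)) (fun _ => by simp) p
  simp only [Finset.notMem_empty, iff_false] at h
  exact Bool.eq_false_iff.2 h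

/-- The point of the domain which is `e_l` in factor `i` and `0` elsewhere. -/
noncomputable def spt (i : Fin (k + 1)) (l : Λ) : Dom Λ n k := by
  classical
  exact pt (fun j => if j = i then {l} else ∅) (fun j => by
    by_cases h : j = i <;> simp [h])

lemma dval_spt (i : Fin (k + 1)) (l : Λ) (p : Fin (k + 1) × Λ) :
    dval (spt i l : Dom Λ n k) p = true ↔ p = (i, l) := by
  classical
  rw [spt, dval_pt]
  constructor
  · intro h
    by_cases hp : p.1 = i
    · rw [hp, if_pos rfl, Finset.mem_singleton] at h
      exact Prod.ext hp h
    · rw [if_neg hp] at h; exact absurd h (Finset.notMem_empty _)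
  · rintro rfl; simp

lemma spt_ne_zpt (i : Fin (k + 1)) (l : Λ) : (spt i l : Dom Λ n k) ≠ zpt := by
  intro h
  have h1 : dval (spt i l : Dom Λ n k) (i, l) = true := (dval_spt i l (i, l)).2 rfl
  rw [h, dval_zpt] at h1
  exact Bool.false_ne_true h1

lemma bool_eq_of_iff {x y : Bool} (h : x = true ↔ y = true) : x = y := by
  cases x <;> cases y <;> simp_all

/-- Cylinder neighborhoods in a product of subspaces of Cantor cubes. -/
lemma cylinder {ι A : Type*} {S : ι → Set (A → Bool)} {U : Set (∀ i, (S i))}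
    (hU : IsOpen U) {x : ∀ i, (S i)} (hx : x ∈ U) :
    ∃ G : Finset (ι × A), ∀ z : ∀ i, (S i),
      (∀ p ∈ G, (z p.1).1 p.2 = (x p.1).1 p.2) → z ∈ U := by
  classical
  rw [isOpen_pi_iff] at hU
  obtain ⟨I, u, hu, hIu⟩ := hU x hx
  have hsub : ∀ i, ∃ t : Set (A → Bool), i ∈ I → (IsOpen t ∧ Subtype.val ⁻¹' t = u i) := by
    intro i
    by_cases hi : i ∈ I
    · obtain ⟨t, ht, htu⟩ := isOpen_induced_iff.1 (hu i hi).1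
      exact ⟨t, fun _ => ⟨ht, htu⟩⟩
    · exact ⟨∅, fun h => absurd h hi⟩
  choose t ht using hsub
  have hxt : ∀ i, i ∈ I → (x i).1 ∈ t i := by
    intro i hi
    have := (hu i hi).2
    rw [← (ht i hi).2] at this
    exact this
  have hJ : ∀ i, ∃ J : Finset A, i ∈ I → ∃ v : A → Set Bool,
      (∀ a ∈ J, IsOpen (v a) ∧ (x i).1 a ∈ v a) ∧ (J : Set A).pi v ⊆ t i := by
    intro i
    by_cases hi : i ∈ I
    · obtain ⟨J, v, hv, hJv⟩ := (isOpen_pi_iff.1 (ht i hi).1) (x i).1 (hxt i hi)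
      exact ⟨J, fun _ => ⟨v, fun a ha => hv a ha, hJv⟩⟩
    · exact ⟨∅, fun h => absurd h hi⟩
  choose J hJ' using hJ
  refine ⟨I.biUnion (fun i => (J i).image (fun a => (i, a))), ?_⟩
  intro z hz
  apply hIu
  intro i hi
  obtain ⟨v, hv, hJv⟩ := hJ' i hi
  have hzi : (z i).1 ∈ t i := by
    apply hJv
    intro a ha
    have hpa : (i, a) ∈ I.biUnion (fun i => (J i).image (fun a => (i, a))) := by
      apply Finset.mem_biUnion.2 ⟨i, hi, ?_⟩
      exact Finset.mem_image.2 ⟨a, ha, rfl⟩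
    have := hz (i, a) hpa
    simp only at this
    rw [this]
    exact (hv a ha).2
  rw [← (ht i hi).2]
  exact hzi

/-- Openness of value conditions. -/
lemma isOpen_val {f : Dom Λ n k → Cod Γ n k} (hf : Continuous f) (m : ℕ ⊕ Fin k) (γ : Γ)
    (b : Bool) : IsOpen {z : Dom Λ n k | yval (f z) m γ = b} := by
  have hc : Continuous fun z : Dom Λ n k => yval (f z) m γ := by
    cases m with
    | inl m =>
        exact (continuous_apply γ).comp (continuous_subtype_val.comp
          ((continuous_apply m).comp hf.fst))
    | inr j =>
        exact (continuous_apply γ).comp (continuous_subtype_val.comp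
          ((continuous_apply j).comp hf.snd))
  exact (isOpen_discrete {b}).preimage hc

lemma uncount_diff {α : Type*} {S T : Set α} (hS : ¬ S.Countable) (hT : T.Countable) :
    ¬ (S \ T).Countable := by
  intro h
  apply hS
  have : S ⊆ (S \ T) ∪ T := by
    intro x hx
    by_cases hxT : x ∈ T
    · exact Or.inr hxT
    · exact Or.inl ⟨hx, hxT⟩
  exact (h.union hT).mono this

lemma uncountable_slice {T : Set ((ℕ ⊕ Fin k) × Γ)} (hT : ¬ T.Countable) :
    ∃ m, ¬ {γ | (m, γ) ∈ T}.Countable := by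
  by_contra h
  push_neg at h
  apply hT
  have hsub : T ⊆ ⋃ m : ℕ ⊕ Fin k, (fun γ => (m, γ)) '' {γ | (m, γ) ∈ T} := by
    rintro ⟨m, γ⟩ hmγ
    exact mem_iUnion.2 ⟨m, ⟨γ, hmγ, rfl⟩⟩
  exact ((countable_iUnion fun m => ((h m).image _)).mono hsub)

lemma overflow {α : Type*} {S : Set α} (hfin : S.Finite) {r : ℕ} (hcard : S.ncard ≤ r)
    (g : Fin (r + 1) → α) (hg : Injective g) (hmem : ∀ t, g t ∈ S) : False := by
  classical
  have h1 : (Finset.image g Finset.univ).card = r + 1 := by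
    rw [Finset.card_image_of_injective _ hg, Finset.card_univ, Fintype.card_fin]
  have h2 : (↑(Finset.image g Finset.univ) : Set α) ⊆ S := by
    intro x hx
    simp only [Finset.coe_image, Finset.coe_univ, image_univ, mem_range] at hx
    obtain ⟨t, rfl⟩ := hx
    exact hmem t
  have h3 := Set.ncard_le_ncard h2 hfin
  rw [Set.ncard_coe_finset, h1] at h3
  omega

/-- The free set lemma: from any uncountable family one can pick `r` elements that are
mutually free with respect to the finite constraint sets. -/
lemma freeSet {ι : Type*} (i : ι) (a : Γ → Λ) (G : Γ → Finset (ι × Λ)) (r : ℕ) :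
    ∀ Γ₀ : Set Γ, ¬ Γ₀.Countable → InjOn a Γ₀ →
    ∃ g : Fin r → Γ, Injective g ∧ (∀ t, g t ∈ Γ₀) ∧
      ∀ s t, s ≠ t → (i, a (g s)) ∉ G (g t) := by
  induction r with
  | zero =>
      intro Γ₀ _ _
      exact ⟨Fin.elim0, fun s => s.elim0, fun t => t.elim0, fun s => s.elim0⟩
  | succ r ih =>
      intro Γ₀ hΓ₀ hinj
      have hinf : Γ₀.Infinite := fun hfin => hΓ₀ hfin.countable
      set e := hinf.natEmbedding with he
      set W : Set (ι × Λ) := ⋃ q : ℕ, ↑(G ((e q) : Γ)) with hWdef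
      have hW : W.Countable := countable_iUnion fun q => (G _).countable_toSet
      have hBad1 : {γ ∈ Γ₀ | (i, a γ) ∈ W}.Countable := by
        apply Set.countable_of_injective_of_countable_image
          (f := fun γ => ((i, a γ) : ι × Λ))
        · intro x hx y hy hxy
          exact hinj hx.1 hy.1 (congrArg Prod.snd hxy)
        · apply hW.mono
          rintro p ⟨γ, hγ, rfl⟩
          exact hγ.2
      have hBad2 : (range fun q : ℕ => ((e q) : Γ)).Countable := countable_range _
      set Γ₁ := Γ₀ \ ({γ ∈ Γ₀ | (i, a γ) ∈ W} ∪ range fun q : ℕ => ((e q) : Γ)) with hΓ₁def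
      have hΓ₁ : ¬ Γ₁.Countable := uncount_diff hΓ₀ (hBad1.union hBad2)
      obtain ⟨g, hg, hgmem, hgfree⟩ := ih Γ₁ hΓ₁ (hinj.mono diff_subset)
      have hgΓ₀ : ∀ t, g t ∈ Γ₀ := fun t => (hgmem t).1
      have hgW : ∀ t, (i, a (g t)) ∉ W := by
        intro t hW'
        exact (hgmem t).2 (Or.inl ⟨hgΓ₀ t, hW'⟩)
      have hge : ∀ t, g t ∉ range fun q : ℕ => ((e q) : Γ) := fun t ht => (hgmem t).2 (Or.inr ht)
      -- pick a good index q
      have hfin1 : (⋃ t : Fin r, ↑(G (g t)) : Set (ι × Λ)).Finite :=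
        Set.finite_iUnion fun t => (G _).finite_toSet
      have hbadfin : {q : ℕ | (i, a ((e q) : Γ)) ∈ ⋃ t : Fin r, ↑(G (g t))}.Finite := by
        have hinj2 : Injective fun q : ℕ => ((i, a ((e q) : Γ)) : ι × Λ) := by
          intro q q' hqq
          have h2 : a ((e q) : Γ) = a ((e q') : Γ) := congrArg Prod.snd hqq
          have h3 : ((e q) : Γ) = ((e q') : Γ) := hinj (e q).2 (e q').2 h2
          exact e.injective (Subtype.ext h3)
        exact Set.Finite.preimage hinj2.injOn hfin1
      obtain ⟨q, hq⟩ := (hbadfin.infinite_compl).nonempty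
      simp only [mem_compl_iff, mem_setOf_eq] at hq
      -- assemble
      refine ⟨Fin.cons ((e q) : Γ) g, ?_, ?_, ?_⟩
      · apply Fin.cons_injective_of_injective ?_ hg
        intro hmem
        obtain ⟨t, ht⟩ := hmem
        exact hge t ⟨q, ht.symm⟩
      · intro t
        refine Fin.cases ?_ ?_ t
        · simp only [Fin.cons_zero]; exact (e q).2
        · intro t'; simpa using hgΓ₀ t'
      · intro s t hst
        obtain rfl | ⟨s', rfl⟩ := Fin.eq_zero_or_eq_succ s <;>
          obtain rfl | ⟨t', rfl⟩ := Fin.eq_zero_or_eq_succ t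
        · exact absurd rfl hst
        · simp only [Fin.cons_zero, Fin.cons_succ]
          intro hmem
          exact hq (mem_iUnion.2 ⟨t', hmem⟩)
        · simp only [Fin.cons_zero, Fin.cons_succ]
          intro hmem
          exact hgW s' (mem_iUnion.2 ⟨q, hmem⟩)
        · simp only [Fin.cons_succ]
          exact hgfree s' t' (fun hss => hst (by rw [hss]))

/-- Extraction of a coordinate with uncountably many persistent fresh support points,
for each domain factor. -/
lemma extract [Uncountable Λ] {f : Dom Λ n k → Cod Γ n k}
    (hf : Continuous f) (hinj : Injective f) (i : Fin (k + 1)) :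
    ∃ (m : ℕ ⊕ Fin k) (Γ₀ : Set Γ) (a : Γ → Λ) (G : Γ → Finset (Fin (k + 1) × Λ)),
      ¬ Γ₀.Countable ∧ InjOn a Γ₀ ∧
      ∀ γ ∈ Γ₀, ∀ z : Dom Λ n k,
        (∀ p ∈ G γ, dval z p = dval (spt i (a γ) : Dom Λ n k) p) → yval (f z) m γ = true := by
  classical
  -- witnesses of injectivity
  have hex : ∀ l : Λ, ∃ p : (ℕ ⊕ Fin k) × Γ,
      yval (f (spt i l)) p.1 p.2 ≠ yval (f (zpt : Dom Λ n k)) p.1 p.2 := by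
    intro l
    by_contra h
    push_neg at h
    exact spt_ne_zpt i l (hinj (yval_ext fun m γ => h (m, γ)))
  choose w hw using hex
  -- fibers of w are finite
  have hfib : ∀ v : (ℕ ⊕ Fin k) × Γ, {l : Λ | w l = v}.Finite := by
    intro v
    obtain ⟨G, hG⟩ := cylinder (isOpen_val hf v.1 v.2 (yval (f (zpt : Dom Λ n k)) v.1 v.2))
      (show (zpt : Dom Λ n k) ∈ {z : Dom Λ n k | yval (f z) v.1 v.2 = _} from rfl)
    apply Set.Finite.subset (G.image Prod.snd).finite_toSet
    intro l hl
    simp only [mem_setOf_eq] at hl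
    by_contra hnot
    have hagree : ∀ p ∈ G, dval (spt i l : Dom Λ n k) p = dval (zpt : Dom Λ n k) p := by
      intro p hp
      rw [dval_zpt]
      apply Bool.eq_false_iff.2
      intro htrue
      have := (dval_spt i l p).1 htrue
      apply hnot
      rw [this] at hp
      exact Finset.mem_coe.2 (Finset.mem_image.2 ⟨(i, l), hp, rfl⟩)
    have hmem := hG (spt i l) (by
      intro p hp
      exact hagree p hp)
    rw [mem_setOf_eq] at hmem
    have := hw l
    rw [hl] at this
    exact this hmem
  -- the range of w is uncountable
  have himg : ¬ (range w).Countable := by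
    intro hc
    apply (not_countable_univ : ¬ (univ : Set Λ).Countable)
    have hsub : (univ : Set Λ) ⊆ ⋃ v ∈ range w, {l | w l = v} := by
      intro l _
      exact mem_biUnion ⟨l, rfl⟩ rfl
    exact ((hc.biUnion fun v _ => (hfib v).countable).mono hsub)
  obtain ⟨m, hm⟩ := uncountable_slice himg
  -- remove the support of f 0 at m
  have hsupp : {γ | yval (f (zpt : Dom Λ n k)) m γ = true}.Finite := yval_supp_finite _ m
  set Γ₀ : Set Γ := {γ | (m, γ) ∈ range w} \ {γ | yval (f (zpt : Dom Λ n k)) m γ = true}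
    with hΓ₀def
  have hΓ₀ : ¬ Γ₀.Countable := uncount_diff hm hsupp.countable
  -- choice of preimages
  have hchoice : ∀ γ : Γ, ∃ l : Λ, (m, γ) ∈ range w → w l = (m, γ) := by
    intro γ
    by_cases h : (m, γ) ∈ range w
    · obtain ⟨l, hl⟩ := h
      exact ⟨l, fun _ => hl⟩
    · exact ⟨Classical.arbitrary Λ, fun h' => absurd h' h⟩
  choose a ha using hchoice
  have haspec : ∀ γ ∈ Γ₀, w (a γ) = (m, γ) := fun γ hγ => ha γ hγ.1
  have hainj : InjOn a Γ₀ := by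
    intro γ hγ γ' hγ' haa
    have h1 := haspec γ hγ
    rw [haa, haspec γ' hγ'] at h1
    exact (Prod.ext_iff.1 h1.symm).2
  -- the value is on
  have htrue : ∀ γ ∈ Γ₀, yval (f (spt i (a γ) : Dom Λ n k)) m γ = true := by
    intro γ hγ
    have h1 := hw (a γ)
    rw [haspec γ hγ] at h1
    have h2 : ¬ yval (f (zpt : Dom Λ n k)) m γ = true := hγ.2
    have h0 : yval (f (zpt : Dom Λ n k)) m γ = false := by
      cases hb : yval (f (zpt : Dom Λ n k)) m γ
      · rfl
      · exact absurd hb h2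
    rw [h0] at h1
    cases hb : yval (f (spt i (a γ) : Dom Λ n k)) m γ
    · rw [hb] at h1; exact absurd rfl h1
    · rfl
  -- persistence via cylinders
  have hcyl : ∀ γ : Γ, ∃ G : Finset (Fin (k + 1) × Λ), γ ∈ Γ₀ →
      ∀ z : Dom Λ n k, (∀ p ∈ G, dval z p = dval (spt i (a γ) : Dom Λ n k) p) →
        yval (f z) m γ = true := by
    intro γ
    by_cases hγ : γ ∈ Γ₀
    · obtain ⟨G, hG⟩ := cylinder (isOpen_val hf m γ true)
        (show (spt i (a γ) : Dom Λ n k) ∈ {z : Dom Λ n k | yval (f z) m γ = true} from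
          htrue γ hγ)
      exact ⟨G, fun _ z hz => hG z hz⟩
    · exact ⟨∅, fun h => absurd h hγ⟩
  choose G hG using hcyl
  exact ⟨m, Γ₀, a, G, hΓ₀, hainj, fun γ hγ z hz => hG γ hγ z hz⟩


/-- The main combinatorial assembly. -/
lemma main [Uncountable Λ] (f : Dom Λ n k → Cod Γ n k) (hf : Continuous f)
    (hinj : Injective f) : False := by
  classical
  have hext := fun i : Fin (k + 1) => extract (Λ := Λ) (Γ := Γ) (n := n) (k := k) hf hinj i
  choose m Γ₀ a G hΓ₀ hainj hpers using hext
  by_cases hcase : ∃ (i : Fin (k + 1)) (m₀ : ℕ), m i = Sum.inl m₀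
  · -- a small coordinate: overflow with n+1 fresh points in factor i
    obtain ⟨i, m₀, hi⟩ := hcase
    obtain ⟨g, hg, hgmem, hgfree⟩ := freeSet i (a i) (G i) (n + 1) (Γ₀ i) (hΓ₀ i) (hainj i)
    set A : Finset Λ := Finset.image (fun t => a i (g t)) Finset.univ with hA
    have hAcard : A.card ≤ n + 1 := le_trans Finset.card_image_le (by simp)
    have hcards : ∀ j, ((fun j => if j = i then A else ∅) j).card ≤ n + 1 := fun j => by
      by_cases h : j = i <;> simp [h, hAcard]
    set z : Dom Λ n k := pt (fun j => if j = i then A else ∅) hcards with hzdef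
    have hzmem : ∀ p : Fin (k + 1) × Λ,
        dval z p = true ↔ (p.1 = i ∧ ∃ t, a i (g t) = p.2) := by
      intro p
      rw [hzdef, dval_pt]
      by_cases h : p.1 = i <;> simp [h, hA]
    have hon : ∀ t, yval (f z) (m i) (g t) = true := by
      intro t
      apply hpers i (g t) (hgmem t) z
      intro p hp
      apply bool_eq_of_iff
      rw [hzmem, dval_spt]
      constructor
      · rintro ⟨hpi, s, hps⟩
        rcases eq_or_ne s t with rfl | hst
        · exact Prod.ext hpi (hps.symm)
        · exfalso
          apply hgfree s t hst
          have : p = (i, a i (g s)) := Prod.ext hpi hps.symm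
          rwa [this] at hp
      · rintro rfl
        exact ⟨rfl, t, rfl⟩
    have hfin : {γ | yval (f z) (m i) γ = true}.Finite := yval_supp_finite _ _
    have hncard : {γ | yval (f z) (m i) γ = true}.ncard ≤ n := by
      rw [hi]
      exact yval_supp_ncard_inl _ _
    exact overflow hfin hncard g hg (fun t => hon t)
  · -- all coordinates are big: two factors share one, overflow with n+2 fresh points
    push_neg at hcase
    have hj' : ∀ i : Fin (k + 1), ∃ jj : Fin k, m i = Sum.inr jj := by
      intro i
      cases hmi : m i with
      | inl m₀ => exact absurd hmi (hcase i m₀)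
      | inr jj => exact ⟨jj, rfl⟩
    choose jj hjj using hj'
    obtain ⟨i, i', hne, heq⟩ := Fintype.exists_ne_map_eq_of_card_lt jj (by simp)
    have hmm : m i' = m i := by rw [hjj i, hjj i', heq]
    -- countable subfamily trick
    have hinf2 : (Γ₀ i').Infinite := fun h => hΓ₀ i' h.countable
    set e := hinf2.natEmbedding with he
    set W : Set (Fin (k + 1) × Λ) := ⋃ q : ℕ, ↑(G i' ((e q) : Γ)) with hWdef
    have hW : W.Countable := countable_iUnion fun q => (G _ _).countable_toSet
    have hBad : {γ ∈ Γ₀ i | (i, a i γ) ∈ W}.Countable := by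
      apply Set.countable_of_injective_of_countable_image
        (f := fun γ => ((i, a i γ) : Fin (k + 1) × Λ))
      · intro x hx y hy hxy
        exact hainj i hx.1 hy.1 (congrArg Prod.snd hxy)
      · apply hW.mono
        rintro p ⟨γ, hγ, rfl⟩
        exact hγ.2
    set Γ₁ : Set Γ := Γ₀ i \ {γ ∈ Γ₀ i | (i, a i γ) ∈ W} with hΓ₁def
    have hΓ₁ : ¬ Γ₁.Countable := uncount_diff (hΓ₀ i) hBad
    obtain ⟨g, hg, hgmem, hgfree⟩ := freeSet i (a i) (G i) (n + 1) Γ₁ hΓ₁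
      ((hainj i).mono diff_subset)
    have hgΓ₀ : ∀ t, g t ∈ Γ₀ i := fun t => (hgmem t).1
    have hgW : ∀ t, (i, a i (g t)) ∉ W := by
      intro t hW'
      exact (hgmem t).2 ⟨hgΓ₀ t, hW'⟩
    -- pick a good q
    have hfinU : (⋃ t : Fin (n + 1), ↑(G i (g t)) : Set (Fin (k + 1) × Λ)).Finite :=
      Set.finite_iUnion fun t => (G _ _).finite_toSet
    have hS1 : {q : ℕ | (i', a i' ((e q) : Γ)) ∈ ⋃ t : Fin (n + 1), ↑(G i (g t))}.Finite := by
      have hinj2 : Injective fun q : ℕ => ((i', a i' ((e q) : Γ)) : Fin (k + 1) × Λ) := by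
        intro q q' hqq
        have h2 : a i' ((e q) : Γ) = a i' ((e q') : Γ) := congrArg Prod.snd hqq
        have h3 : ((e q) : Γ) = ((e q') : Γ) := hainj i' (e q).2 (e q').2 h2
        exact e.injective (Subtype.ext h3)
      exact Set.Finite.preimage hinj2.injOn hfinU
    have hS2 : {q : ℕ | ((e q) : Γ) ∈ range g}.Finite := by
      have hinj3 : Injective fun q : ℕ => ((e q) : Γ) := by
        intro q q' hqq
        exact e.injective (Subtype.ext hqq)
      exact Set.Finite.preimage hinj3.injOn (finite_range g)
    obtain ⟨q, hq⟩ := ((hS1.union hS2).infinite_compl).nonempty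
    simp only [mem_compl_iff, mem_union, mem_setOf_eq, not_or] at hq
    obtain ⟨hq1, hq2⟩ := hq
    have hne' : i' ≠ i := fun h => hne h.symm
    set γ' : Γ := ((e q : Γ₀ i') : Γ) with hγ'def
    set b : Λ := a i' γ' with hbdef
    -- the big point
    set A : Finset Λ := Finset.image (fun t => a i (g t)) Finset.univ with hA
    have hAcard : A.card ≤ n + 1 := le_trans Finset.card_image_le (by simp)
    have hcards : ∀ j, ((fun j => if j = i then A else if j = i' then {b} else ∅) j).card
        ≤ n + 1 := fun j => by
      by_cases h : j = i
      · simp [h, hAcard]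
      · by_cases h' : j = i' <;> simp [h, h', hAcard, hne']
    set z : Dom Λ n k := pt (fun j => if j = i then A else if j = i' then {b} else ∅) hcards
      with hzdef
    have hzmem : ∀ p : Fin (k + 1) × Λ,
        dval z p = true ↔ ((p.1 = i ∧ ∃ t, a i (g t) = p.2) ∨ (p.1 = i' ∧ p.2 = b)) := by
      intro p
      rw [hzdef, dval_pt]
      by_cases h : p.1 = i
      · have h' : ¬ p.1 = i' := by rw [h]; exact hne
        simp [h, h', hA, hne, hne']
      · by_cases h' : p.1 = i' <;> simp [h, h', hA, hne, hne']
    -- factor i persistence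
    have hon : ∀ t, yval (f z) (m i) (g t) = true := by
      intro t
      apply hpers i (g t) (hgΓ₀ t) z
      intro p hp
      apply bool_eq_of_iff
      rw [hzmem, dval_spt]
      constructor
      · rintro (⟨hpi, s, hps⟩ | ⟨hpi', hpb⟩)
        · rcases eq_or_ne s t with rfl | hst
          · exact Prod.ext hpi (hps.symm)
          · exfalso
            apply hgfree s t hst
            have : p = (i, a i (g s)) := Prod.ext hpi hps.symm
            rwa [this] at hp
        · exfalso
          apply hq1
          have : p = (i', a i' γ') := Prod.ext hpi' (by rw [hpb, hbdef])
          rw [this] at hp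
          exact mem_iUnion.2 ⟨t, hp⟩
      · rintro rfl
        exact Or.inl ⟨rfl, t, rfl⟩
    -- factor i' persistence
    have hon' : yval (f z) (m i) γ' = true := by
      rw [← hmm]
      apply hpers i' γ' (e q).2 z
      intro p hp
      apply bool_eq_of_iff
      rw [hzmem, dval_spt]
      constructor
      · rintro (⟨hpi, s, hps⟩ | ⟨hpi', hpb⟩)
        · exfalso
          apply hgW s
          have : p = (i, a i (g s)) := Prod.ext hpi hps.symm
          rw [this] at hp
          exact mem_iUnion.2 ⟨q, hp⟩
        · exact Prod.ext hpi' hpb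
      · rintro rfl
        exact Or.inr ⟨rfl, rfl⟩
    -- overflow
    have hfin : {γ | yval (f z) (m i) γ = true}.Finite := yval_supp_finite _ _
    have hncard : {γ | yval (f z) (m i) γ = true}.ncard ≤ n + 1 := yval_supp_ncard _ _
    have hconsinj : Injective (Fin.cons γ' g : Fin (n + 2) → Γ) :=
      Fin.cons_injective_of_injective hq2 hg
    apply overflow hfin hncard (Fin.cons γ' g) hconsinj
    intro t
    refine Fin.cases ?_ ?_ t
    · simpa using hon'
    · intro t'
      simpa using hon t'

end Stmt7

/-- For uncountable `Λ` and `n, k ≥ 0`, the space `σ_{n+1}(Λ)^{k+1}` does not embed into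
`σ_n(Γ)^ω × σ_{n+1}(Γ)^k`. -/
theorem stmt_7 (Λ : Type*) [Uncountable Λ] (Γ : Type*) (n k : ℕ) :
    ∀ f : (Fin (k + 1) → (sigmaSet Λ (n + 1))) →
          (ℕ → (sigmaSet Γ n)) × (Fin k → (sigmaSet Γ (n + 1))),
      Continuous f → ¬ Function.Injective f := by
  intro f hf hinj
  exact Stmt7.main f hf hinj
end

section
/- Let Λ be uncountable, n, k ≥ 0, X = σ_{n+1}(Λ)^{k+1}, and for indices i ≠ i' in {0,…,k} let e_i^λ denote the point with {λ} in coordinate i and ∅ elsewhere. Suppose for every λ ∈ Λ we are given neighborhoods B_λ of e_i^λ and B'_λ of e_{i'}^λ. Then there exist λ_0 ∈ Λ and an infinite set S ⊆ Λ such that for every F ⊆ S with |F| = n+1, the intersection B_{λ_0} ∩ ⋂_{μ∈F} B'_μ is nonempty. -/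
/-- The empty set as an element of `σ_m(Λ)`. -/
def emptyElt (Λ : Type*) (m : ℕ) : sigmaSet Λ m :=
  ⟨fun _ => false, by simp [sigmaSet]⟩

/-- The singleton `{l}` as an element of `σ_{n+1}(Λ)`. -/
def singElt {Λ : Type*} [DecidableEq Λ] (n : ℕ) (l : Λ) : sigmaSet Λ (n + 1) := by
  refine ⟨fun γ => decide (γ = l), ?_⟩
  have h : {γ : Λ | decide (γ = l) = true} = {l} := by ext γ; simp
  constructor
  · rw [h]; exact Set.finite_singleton l
  · rw [h]; simp

/-- The point `e_i^λ` of `σ_{n+1}(Λ)^{k+1}`: singleton `{l}` in coordinate `i`, `∅` elsewhere. -/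
def eElt {Λ : Type*} [DecidableEq Λ] (n k : ℕ) (i : Fin (k + 1)) (l : Λ) :
    Fin (k + 1) → sigmaSet Λ (n + 1) :=
  fun j => if j = i then singElt n l else emptyElt Λ (n + 1)

lemma nhd_fin {Λ : Type*} {n k : ℕ} (p : Fin (k+1) → sigmaSet Λ (n+1))
    {U : Set (Fin (k+1) → sigmaSet Λ (n+1))} (hU : U ∈ nhds p) :
    ∃ T : Finset Λ, ∀ x : Fin (k+1) → sigmaSet Λ (n+1),
      (∀ j, ∀ γ ∈ T, (x j).1 γ = (p j).1 γ) → x ∈ U := by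
  classical
  rw [nhds_pi, Filter.mem_pi] at hU
  obtain ⟨I, hI, t, ht, hsub⟩ := hU
  have key : ∀ j, ∃ Tj : Finset Λ, ∀ q : sigmaSet Λ (n+1),
      (∀ γ ∈ Tj, (q : Λ → Bool) γ = (p j).1 γ) → q ∈ t j := by
    intro j
    have h1 := ht j
    rw [nhds_subtype, Filter.mem_comap] at h1
    obtain ⟨V, hV, hVsub⟩ := h1
    rw [nhds_pi, Filter.mem_pi] at hV
    obtain ⟨J, hJ, w, hw, hwsub⟩ := hV
    refine ⟨hJ.toFinset, fun q hq => ?_⟩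
    apply hVsub
    apply hwsub
    intro γ hγ
    have := hq γ (by simpa using hγ)
    rw [this]
    have := hw γ
    rw [nhds_discrete, Filter.mem_pure] at this
    exact this
  choose Tf hTf using key
  refine ⟨Finset.univ.biUnion Tf, fun x hx => ?_⟩
  apply hsub
  intro j _
  exact hTf j (x j) (fun γ hγ => hx j γ (Finset.mem_biUnion.2 ⟨j, Finset.mem_univ j, hγ⟩))

lemma freeSet {Λ : Type*} [DecidableEq Λ] : ∀ (m : ℕ) (A : Set Λ) (t : Λ → Finset Λ),
    ¬A.Countable → (∀ a ∈ A, (t a).card ≤ m) →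
    ∃ S : Set Λ, S ⊆ A ∧ S.Infinite ∧ ∀ a ∈ S, ∀ b ∈ S, a ≠ b → a ∉ t b := by
  intro m
  induction m with
  | zero =>
    intro A t hA hc
    refine ⟨A, subset_rfl, fun hfin => hA hfin.countable, fun a ha b hb _ hab => ?_⟩
    have : t b = ∅ := Finset.card_eq_zero.1 (Nat.le_zero.1 (hc b hb))
    simp [this] at hab
  | succ m ih =>
    intro A t hA hc
    by_contra hcon
    push_neg at hcon
    set Fam : Set (Set Λ) := {S | S ⊆ A ∧ ∀ a ∈ S, ∀ b ∈ S, a ≠ b → a ∉ t b} with hFam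
    obtain ⟨M, hM⟩ := zorn_subset Fam (by
      intro c hc' hchain
      refine ⟨⋃₀ c, ⟨?_, ?_⟩, fun s hs => Set.subset_sUnion_of_mem hs⟩
      · exact Set.sUnion_subset fun s hs => (hc' hs).1
      · rintro a ⟨s₁, hs₁, ha⟩ b ⟨s₂, hs₂, hb⟩ hab
        rcases hchain.total hs₁ hs₂ with h | h
        · exact (hc' hs₂).2 a (h ha) b hb hab
        · exact (hc' hs₁).2 a ha b (h hb) hab)
    obtain ⟨⟨hMA, hMfree⟩, hMmax⟩ := hM
    have hMfin : M.Finite := by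
      by_contra hMinf
      obtain ⟨a, ha, b, hb, hab, hmem⟩ := hcon M hMA hMinf
      exact hMfree a ha b hb hab hmem
    -- every λ in A outside M and outside ⋃ t μ has some μ ∈ M with μ ∈ t λ
    have claim : ∀ l ∈ A, l ∉ M → l ∉ (⋃ μ ∈ M, (t μ : Set Λ)) → ∃ μ ∈ M, μ ∈ t l := by
      intro l hlA hlM hlU
      by_contra hno
      push_neg at hno
      have : insert l M ∈ Fam := by
        constructor
        · exact Set.insert_subset hlA hMA
        · rintro a (rfl | ha) b (rfl | hb) hab
          · exact absurd rfl hab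
          · intro h; exact hlU (Set.mem_biUnion hb h)
          · exact hno a ha
          · exact hMfree a ha b hb hab
      exact hlM (hMmax this (Set.subset_insert l M) (Set.mem_insert l M))
    -- find μ* with uncountable preimage
    have hsub : A \ (M ∪ ⋃ μ ∈ M, (t μ : Set Λ)) ⊆ ⋃ μ ∈ M, {l ∈ A | μ ∈ t l} := by
      rintro l ⟨hlA, hl⟩
      simp only [Set.mem_union, not_or] at hl
      obtain ⟨μ, hμM, hμt⟩ := claim l hlA hl.1 hl.2
      exact Set.mem_biUnion hμM ⟨hlA, hμt⟩
    have hAdiff : ¬(A \ (M ∪ ⋃ μ ∈ M, (t μ : Set Λ))).Countable := by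
      intro hcnt
      apply hA
      have hcnt2 : (M ∪ ⋃ μ ∈ M, (t μ : Set Λ)).Countable :=
        (hMfin.countable).union ((hMfin.countable.biUnion (fun μ _ => (t μ).countable_toSet)))
      exact (hcnt.union hcnt2).mono (by intro x hx; by_cases h : x ∈ M ∪ ⋃ μ ∈ M, (t μ : Set Λ)
                                        · exact Or.inr h
                                        · exact Or.inl ⟨hx, h⟩)
    have : ∃ μ ∈ M, ¬({l ∈ A | μ ∈ t l}).Countable := by
      by_contra hall
      push_neg at hall
      exact hAdiff ((hMfin.countable.biUnion (fun μ hμ => hall μ hμ)).mono hsub)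
    obtain ⟨μ, hμM, hμunc⟩ := this
    set Bs : Set Λ := {l ∈ A | μ ∈ t l} \ {μ} with hBs
    have hBunc : ¬Bs.Countable := by
      intro h
      exact hμunc ((h.union (Set.countable_singleton μ)).mono (fun x hx => by
        by_cases hxμ : x = μ
        · exact Or.inr (by simp [hxμ])
        · exact Or.inl ⟨hx, by simp [hxμ]⟩))
    obtain ⟨S, hSB, hSinf, hSfree⟩ := ih Bs (fun l => (t l).erase μ) hBunc (by
      intro a ha
      have hμa : μ ∈ t a := ha.1.2
      have h1 := Finset.card_erase_of_mem hμa
      have h2 := hc a ha.1.1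
      show ((t a).erase μ).card ≤ m
      omega)
    obtain ⟨a, ha, b, hb, hab, hmem⟩ := hcon S (fun x hx => (hSB hx).1.1) hSinf
    have haμ : a ≠ μ := by
      intro h; exact (hSB ha).2 (by simp [h])
    exact hSfree a ha b hb hab (Finset.mem_erase.2 ⟨haμ, hmem⟩)

/-- Given neighborhoods `B_λ` of `e_i^λ` and `B'_λ` of `e_{i'}^λ` (`i ≠ i'`), there are
`λ₀` and an infinite `S ⊆ Λ` such that `B_{λ₀} ∩ ⋂_{μ ∈ F} B'_μ ≠ ∅` for every
`F ⊆ S` with `|F| = n+1`. -/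
theorem stmt_9 (Λ : Type*) [Uncountable Λ] [DecidableEq Λ] (n k : ℕ)
    (i i' : Fin (k + 1)) (hii : i ≠ i')
    (B B' : Λ → Set (Fin (k + 1) → sigmaSet Λ (n + 1)))
    (hB : ∀ l, B l ∈ nhds (eElt n k i l))
    (hB' : ∀ l, B' l ∈ nhds (eElt n k i' l)) :
    ∃ (l₀ : Λ) (S : Set Λ), S.Infinite ∧
      ∀ F : Finset Λ, ↑F ⊆ S → F.card = n + 1 →
        (B l₀ ∩ ⋂ μ ∈ F, B' μ).Nonempty := by
  classical
  choose T hT using fun l => nhd_fin _ (hB l)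
  choose T' hT' using fun l => nhd_fin _ (hB' l)
  -- pigeonhole to bound card of T'
  have hpig : ∃ m : ℕ, ¬{l : Λ | (T' l).card = m}.Countable := by
    by_contra hall
    push_neg at hall
    have : (Set.univ : Set Λ).Countable := by
      have : (Set.univ : Set Λ) ⊆ ⋃ m : ℕ, {l : Λ | (T' l).card = m} := by
        intro l _; exact Set.mem_iUnion.2 ⟨(T' l).card, rfl⟩
      exact (Set.countable_iUnion hall).mono this
    exact not_countable (Set.countable_univ_iff.mp this)
  obtain ⟨m, hm⟩ := hpig
  obtain ⟨S₀, hS₀A, hS₀inf, hS₀free⟩ := freeSet m {l : Λ | (T' l).card = m} T' hm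
    (fun a ha => le_of_eq ha)
  obtain ⟨l₀, hl₀⟩ := hS₀inf.nonempty
  refine ⟨l₀, S₀ \ (insert l₀ (T l₀) : Finset Λ), hS₀inf.diff (Finset.finite_toSet _), ?_⟩
  intro F hFS hFcard
  -- the witness point
  have hFset : {γ : Λ | decide (γ ∈ F) = true} = ↑F := by ext γ; simp
  set Fl : sigmaSet Λ (n+1) := ⟨fun γ => decide (γ ∈ F),
    ⟨by show {γ : Λ | decide (γ ∈ F) = true}.Finite; rw [hFset]; exact F.finite_toSet,
     by show {γ : Λ | decide (γ ∈ F) = true}.ncard ≤ n + 1; rw [hFset]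
        simp [Set.ncard_coe_finset, hFcard]⟩⟩ with hFl
  set x : Fin (k+1) → sigmaSet Λ (n+1) :=
    fun j => if j = i then singElt n l₀ else if j = i' then Fl else emptyElt Λ (n+1) with hx
  have hFS₀ : ∀ γ ∈ F, γ ∈ S₀ := fun γ hγ => (hFS hγ).1
  have hFnot : ∀ γ ∈ F, γ ∉ insert l₀ (T l₀) := fun γ hγ => by
    have := (hFS hγ).2; simpa using this
  have xval_i : x i = singElt n l₀ := by simp [hx]
  have xval_i' : x i' = Fl := by simp [hx, Ne.symm hii]
  have xval_o : ∀ j, j ≠ i → j ≠ i' → x j = emptyElt Λ (n+1) := by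
    intro j h1 h2; simp [hx, h1, h2]
  have eval_same : ∀ (r : Fin (k+1)) (l : Λ), eElt n k r l r = singElt n l := by
    intro r l; simp [eElt]
  have eval_ne : ∀ (r j : Fin (k+1)) (l : Λ), j ≠ r → eElt n k r l j = emptyElt Λ (n+1) := by
    intro r j l h; simp [eElt, h]
  refine ⟨x, ?_, ?_⟩
  · -- x ∈ B l₀
    apply hT l₀
    intro j γ hγ
    by_cases hji : j = i
    · rw [hji]; rw [xval_i, eval_same]
    · by_cases hji' : j = i'
      · rw [hji']; rw [xval_i', eval_ne i i' l₀ (Ne.symm hii)]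
        show decide (γ ∈ F) = false
        simp only [decide_eq_false_iff_not]
        intro hγF
        exact hFnot γ hγF (Finset.mem_insert_of_mem hγ)
      · rw [xval_o j hji hji', eval_ne i j l₀ hji]
  · -- x ∈ ⋂ B' μ
    rw [Set.mem_iInter₂]
    intro μ hμF
    have hμS₀ : μ ∈ S₀ := hFS₀ μ hμF
    have hμne : μ ≠ l₀ := fun h => hFnot μ hμF (by simp [h])
    apply hT' μ
    intro j γ hγ
    by_cases hji' : j = i'
    · rw [hji']; rw [xval_i', eval_same]
      show decide (γ ∈ F) = decide (γ = μ)
      by_cases hγμ : γ = μ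
      · simp [hγμ, hμF]
      · have : γ ∉ F := fun hγF => hS₀free γ (hFS₀ γ hγF) μ hμS₀ hγμ hγ
        simp [hγμ, this]
    · by_cases hji : j = i
      · rw [hji]; rw [xval_i, eval_ne i' i μ hii]
        show decide (γ = l₀) = false
        simp only [decide_eq_false_iff_not]
        intro h
        exact hS₀free l₀ hl₀ μ hμS₀ (Ne.symm hμne) (h ▸ hγ)
      · rw [xval_o j hji hji', eval_ne i' j μ hji']
end

section
/- If X is a compact space, C_1, …, C_t are open subsets of X, and σ_n(Λ)^k embeds topologically into C_1 ∪ ⋯ ∪ C_t, then σ_n(Λ)^k embeds into C_i for some i ≤ t. -/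
/-- If `σ_n(Λ)^k` embeds into a finite union of open subsets of a compact space `X`,
then it embeds into one of them. -/
theorem stmt_10 (Λ : Type*) [Infinite Λ] (n k : ℕ)
    (X : Type*) [TopologicalSpace X] [CompactSpace X]
    (t : ℕ) (C : Fin t → Set X) (hC : ∀ i, IsOpen (C i))
    (f : (Fin k → (sigmaSet Λ n)) → (⋃ i, C i : Set X))
    (hfc : Continuous f) (hfi : Function.Injective f) :
    ∃ i, ∃ g : (Fin k → (sigmaSet Λ n)) → (C i : Set X),
      Continuous g ∧ Function.Injective g := by
  classical
  -- the "empty" point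
  have hzmem : (fun _ => false : Λ → Bool) ∈ sigmaSet Λ n := by
    constructor <;> simp [Set.ncard]
  set z : sigmaSet Λ n := ⟨fun _ => false, hzmem⟩ with hzdef
  set x₀ : Fin k → sigmaSet Λ n := fun _ => z with hx₀def
  obtain ⟨i, hi⟩ : ∃ i, (f x₀ : X) ∈ C i := Set.mem_iUnion.1 (f x₀).2
  refine ⟨i, ?_⟩
  -- the open preimage of C i
  set U : Set (Fin k → sigmaSet Λ n) := f ⁻¹' (Subtype.val ⁻¹' C i) with hUdef
  have hUopen : IsOpen U := (((hC i).preimage continuous_subtype_val)).preimage hfc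
  have hU0 : x₀ ∈ U := hi
  have hUnhds : U ∈ nhds x₀ := hUopen.mem_nhds hU0
  rw [nhds_pi, Filter.mem_pi] at hUnhds
  obtain ⟨I, -, V, hV, hVU⟩ := hUnhds
  -- extract finite support sets
  have hV' : ∀ j, ∃ S : Set Λ, S.Finite ∧
      ∀ x : sigmaSet Λ n, (∀ γ ∈ S, (x : Λ → Bool) γ = false) → x ∈ V j := by
    intro j
    have hVj := hV j
    rw [nhds_subtype, Filter.mem_comap] at hVj
    obtain ⟨W, hW, hWV⟩ := hVj
    rw [nhds_pi, Filter.mem_pi] at hW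
    obtain ⟨S, hSfin, B, hB, hBW⟩ := hW
    refine ⟨S, hSfin, fun x hx => hWV (hBW ?_)⟩
    intro γ hγ
    have hfalse : (false : Bool) ∈ B γ := mem_of_mem_nhds (hB γ)
    simpa [hx γ hγ] using hfalse
  choose S hSfin hS using hV'
  set G : Set Λ := ⋃ j, S j with hGdef
  have hGfin : G.Finite := Set.finite_iUnion hSfin
  have hbox : ∀ x : Fin k → sigmaSet Λ n,
      (∀ j, ∀ γ ∈ G, (x j : Λ → Bool) γ = false) → x ∈ U := by
    intro x hx
    apply hVU
    intro j _
    exact hS j (x j) fun γ hγ => hx j γ (Set.mem_iUnion.2 ⟨j, hγ⟩)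
  -- an injection of Λ into the complement of G
  have hcard : Cardinal.mk (↥Gᶜ) = Cardinal.mk Λ :=
    Cardinal.mk_compl_of_infinite G (hGfin.lt_aleph0.trans_le (Cardinal.aleph0_le_mk Λ))
  obtain ⟨eqv⟩ : Nonempty (Λ ≃ ↥Gᶜ) := Cardinal.eq.1 hcard.symm
  set e : Λ → Λ := fun γ => (eqv γ : Λ) with hedef
  have he_inj : Function.Injective e :=
    fun a b hab => eqv.injective (Subtype.ext hab)
  have he_not : ∀ γ, e γ ∉ G := fun γ => (eqv γ).2
  -- the shift map on sigmaSet
  have hHmem : ∀ x : sigmaSet Λ n,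
      (fun l => if h : ∃ γ, e γ = l then (x : Λ → Bool) h.choose else false)
        ∈ sigmaSet Λ n := by
    intro x
    have hset : {l | (if h : ∃ γ, e γ = l then (x : Λ → Bool) h.choose else false) = true}
        = e '' {γ | (x : Λ → Bool) γ = true} := by
      ext l
      constructor
      · intro hl
        simp only [Set.mem_setOf_eq] at hl
        by_cases h : ∃ γ, e γ = l
        · rw [dif_pos h] at hl
          exact ⟨h.choose, hl, h.choose_spec⟩
        · rw [dif_neg h] at hl; exact absurd hl (by simp)
      · rintro ⟨γ, hγ, rfl⟩
        have h : ∃ γ', e γ' = e γ := ⟨γ, rfl⟩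
        have : h.choose = γ := he_inj h.choose_spec
        simp only [Set.mem_setOf_eq, dif_pos h, this]
        exact hγ
    constructor
    · rw [hset]; exact x.2.1.image e
    · rw [hset, Set.ncard_image_of_injective _ he_inj]; exact x.2.2
  set H : sigmaSet Λ n → sigmaSet Λ n :=
    fun x => ⟨fun l => if h : ∃ γ, e γ = l then (x : Λ → Bool) h.choose else false,
      hHmem x⟩ with hHdef
  have hHe : ∀ (x : sigmaSet Λ n) (γ : Λ), (H x : Λ → Bool) (e γ) = (x : Λ → Bool) γ := by
    intro x γ
    have h : ∃ γ', e γ' = e γ := ⟨γ, rfl⟩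
    have h2 : h.choose = γ := he_inj h.choose_spec
    simp only [hHdef, dif_pos h, h2]
  have hHG : ∀ (x : sigmaSet Λ n) (l : Λ), l ∈ G → (H x : Λ → Bool) l = false := by
    intro x l hl
    have h : ¬ ∃ γ, e γ = l := by
      rintro ⟨γ, rfl⟩; exact he_not γ hl
    simp only [hHdef, dif_neg h]
  have hHcont : Continuous H := by
    apply Continuous.subtype_mk
    apply continuous_pi
    intro l
    by_cases h : ∃ γ, e γ = l
    · simp only [dif_pos h]
      exact (continuous_apply _).comp continuous_subtype_val
    · simp only [dif_neg h]
      exact continuous_const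
  have hHinj : Function.Injective H := by
    intro a b hab
    apply Subtype.ext; funext γ
    have := congrFun (congrArg Subtype.val hab) (e γ)
    rwa [hHe, hHe] at this
  -- the final embedding
  have hmem : ∀ x : Fin k → sigmaSet Λ n, (f (fun j => H (x j)) : X) ∈ C i := by
    intro x
    exact hbox (fun j => H (x j)) (fun j γ hγ => hHG (x j) γ hγ)
  refine ⟨fun x => ⟨(f (fun j => H (x j)) : X), hmem x⟩, ?_, ?_⟩
  · apply Continuous.subtype_mk
    exact continuous_subtype_val.comp
      (hfc.comp (continuous_pi fun j => hHcont.comp (continuous_apply j)))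
  · intro a b hab
    have h1 : f (fun j => H (a j)) = f (fun j => H (b j)) := by
      apply Subtype.ext
      simpa using congrArg Subtype.val hab
    have h2 := hfi h1
    funext j
    exact hHinj (congrFun h2 j)
end

section
/- If a compact space expressed as σ_n(Λ)^k = C_1 ∪ ⋯ ∪ C_t with each C_i open, then some C_i contains a homeomorphic copy of σ_n(Λ)^k. -/
/-- If `σ_n(Λ)^k` is covered by finitely many open sets `C_1, …, C_t`, then some `C_i`
contains a homeomorphic copy of `σ_n(Λ)^k`. -/
theorem stmt_11 (Λ : Type*) [Infinite Λ] (n k : ℕ)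
    (t : ℕ) (C : Fin t → Set (Fin k → (sigmaSet Λ n)))
    (hC : ∀ i, IsOpen (C i)) (hcover : (⋃ i, C i) = Set.univ) :
    ∃ i, ∃ g : (Fin k → (sigmaSet Λ n)) → (Fin k → (sigmaSet Λ n)),
      Continuous g ∧ Function.Injective g ∧ Set.range g ⊆ C i := by
  classical
  have hz : (fun _ => false : Λ → Bool) ∈ sigmaSet Λ n := by
    constructor
    · convert Set.finite_empty
      simp
    · convert Nat.zero_le n
      simp [Set.ncard_eq_zero]
  set z₀ : sigmaSet Λ n := ⟨fun _ => false, hz⟩ with hz₀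
  have hmem : (fun _ => z₀ : Fin k → sigmaSet Λ n) ∈ ⋃ i, C i := by
    rw [hcover]; trivial
  obtain ⟨i, hi⟩ := Set.mem_iUnion.mp hmem
  refine ⟨i, ?_⟩
  obtain ⟨I, u, hu, hpi⟩ := isOpen_pi_iff.mp (hC i) _ hi
  -- For each j ∈ I, find a finite set of coordinates controlling membership in u j
  have key : ∀ j : Fin k, ∃ F : Finset Λ,
      ∀ x : sigmaSet Λ n, (∀ γ ∈ F, (x : Λ → Bool) γ = false) → j ∈ I → x ∈ u j := by
    intro j
    by_cases hj : j ∈ I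
    · obtain ⟨hopen, hzu⟩ := hu j hj
      obtain ⟨v, hv, hvu⟩ := isOpen_induced_iff.mp hopen
      have hzv : (fun _ => false : Λ → Bool) ∈ v := by
        rw [← hvu] at hzu; exact hzu
      obtain ⟨Fj, w, hw, hsub⟩ := isOpen_pi_iff.mp hv _ hzv
      refine ⟨Fj, fun x hx _ => ?_⟩
      have : (x : Λ → Bool) ∈ v := by
        apply hsub
        intro γ hγ
        have := (hw γ hγ).2
        rw [hx γ hγ]
        exact this
      rw [← hvu]; exact this
    · exact ⟨∅, fun x _ hj' => absurd hj' hj⟩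
  choose Fs hFs using key
  set F : Finset Λ := Finset.univ.biUnion Fs with hF
  -- an equivalence from Λ onto the complement of F
  have hcard : Cardinal.mk (↥((↑F : Set Λ)ᶜ)) = Cardinal.mk Λ := Cardinal.mk_compl_finset_of_infinite F
  obtain ⟨e⟩ : Nonempty (Λ ≃ ↥((↑F : Set Λ)ᶜ)) := Cardinal.eq.mp hcard.symm
  -- the shift map on sigmaSet
  set f : sigmaSet Λ n → Λ → Bool := fun x γ =>
    if h : γ ∈ ((↑F : Set Λ)ᶜ) then (x : Λ → Bool) (e.symm ⟨γ, h⟩) else false with hfdef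
  have hsupp : ∀ x : sigmaSet Λ n,
      {γ | f x γ = true} = (fun a => ((e a : ↥((↑F : Set Λ)ᶜ)) : Λ)) '' {γ | (x : Λ → Bool) γ = true} := by
    intro x
    ext γ
    simp only [Set.mem_setOf_eq, Set.mem_image, hfdef]
    constructor
    · intro hγ
      by_cases h : γ ∈ ((↑F : Set Λ)ᶜ)
      · rw [dif_pos h] at hγ
        refine ⟨e.symm ⟨γ, h⟩, hγ, ?_⟩
        rw [Equiv.apply_symm_apply]
      · rw [dif_neg h] at hγ; exact absurd hγ (by simp)
    · rintro ⟨a, ha, rfl⟩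
      rw [dif_pos (e a).2]
      convert ha using 2
      exact e.symm_apply_apply a
  have hinj : Function.Injective (fun a => ((e a : ↥((↑F : Set Λ)ᶜ)) : Λ)) :=
    Subtype.val_injective.comp e.injective
  have hmemS : ∀ x : sigmaSet Λ n, f x ∈ sigmaSet Λ n := by
    intro x
    constructor
    · rw [hsupp x]; exact (x.2.1).image _
    · rw [hsupp x, Set.ncard_image_of_injective _ hinj]; exact x.2.2
  set Φ : sigmaSet Λ n → sigmaSet Λ n := fun x => ⟨f x, hmemS x⟩ with hΦ
  have hΦcont : Continuous Φ := by
    refine Continuous.subtype_mk ?_ _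
    refine continuous_pi fun γ => ?_
    by_cases h : γ ∈ ((↑F : Set Λ)ᶜ)
    · simp only [hfdef, dif_pos h]
      exact (continuous_apply _).comp continuous_subtype_val
    · simp only [hfdef, dif_neg h]
      exact continuous_const
  have hΦinj : Function.Injective Φ := by
    intro x y hxy
    have hf : f x = f y := congrArg Subtype.val hxy
    apply Subtype.ext
    funext a
    have := congrFun hf ((e a : ↥((↑F : Set Λ)ᶜ)) : Λ)
    simp only [hfdef, dif_pos (e a).2] at this
    have heq : e.symm ⟨((e a : ↥((↑F : Set Λ)ᶜ)) : Λ), (e a).2⟩ = a := e.symm_apply_apply a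
    rwa [heq] at this
  refine ⟨fun x j => Φ (x j), ?_, ?_, ?_⟩
  · exact continuous_pi fun j => hΦcont.comp (continuous_apply j)
  · intro x y hxy
    funext j
    exact hΦinj (congrFun hxy j)
  · rintro y ⟨x, rfl⟩
    apply hpi
    intro j hj
    refine hFs j (Φ (x j)) ?_ hj
    intro γ hγ
    have hγF : γ ∈ F := Finset.mem_biUnion.mpr ⟨j, Finset.mem_univ j, hγ⟩
    have : γ ∉ ((↑F : Set Λ)ᶜ) := by simp [hγF]
    simp only [hΦ, hfdef, dif_neg this]
end

section
/- For m < n and an infinite Γ, σ_1(Γ) is homeomorphic to a clopen subset of σ_n(Γ); consequently σ_1(Γ)^ω is homeomorphic to a retract of ∏_{i<ω} σ_{k_i}(Γ) for any sequence (k_i) of positive integers. -/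
open Set

lemma sigmaSet_clopen_copy (Γ : Type*) [Infinite Γ] (n : ℕ) (hn : 1 ≤ n) :
    ∃ C : Set (sigmaSet Γ n), IsClopen C ∧ C.Nonempty ∧
      Nonempty ((sigmaSet Γ 1) ≃ₜ C) := by
  classical
  obtain ⟨F, hFcard⟩ := Infinite.exists_subset_card_eq Γ (n - 1)
  have hFfin : (↑F : Set Γ).Finite := F.finite_toSet
  have hmk : Cardinal.mk ↥(↑F : Set Γ)ᶜ = Cardinal.mk Γ :=
    Cardinal.mk_compl_of_infinite _ (hFfin.lt_aleph0.trans_le (Cardinal.aleph0_le_mk Γ))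
  obtain ⟨e'⟩ := Cardinal.eq.1 hmk
  set e : Γ ≃ ↥(↑F : Set Γ)ᶜ := e'.symm with he
  -- the embedding map on functions
  set φ : (Γ → Bool) → Γ → Bool :=
    fun x γ => if h : γ ∈ F then true else x (e.symm ⟨γ, h⟩) with hφ
  have hφsupp : ∀ x : Γ → Bool,
      {γ | φ x γ = true} = ↑F ∪ (fun a => (e a : Γ)) '' {a | x a = true} := by
    intro x
    ext γ
    by_cases h : γ ∈ F
    · simp [hφ, h]
    · have heq : φ x γ = x (e.symm ⟨γ, h⟩) := dif_neg h
      rw [mem_setOf_eq, heq, mem_union, mem_image]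
      constructor
      · intro hx
        exact Or.inr ⟨e.symm ⟨γ, h⟩, hx, congrArg Subtype.val (e.apply_symm_apply ⟨γ, h⟩)⟩
      · rintro (hγ | ⟨a, ha, hae⟩)
        · exact absurd (Finset.mem_coe.1 hγ) h
        · have ha2 : e.symm ⟨γ, h⟩ = a := by
            rw [show (⟨γ, h⟩ : ↥(↑F : Set Γ)ᶜ) = e a from Subtype.ext hae.symm,
              e.symm_apply_apply]
          rw [ha2]; exact ha
  -- φ maps σ₁ into σₙ
  have hφmem : ∀ x ∈ sigmaSet Γ 1, φ x ∈ sigmaSet Γ n := by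
    rintro x ⟨hxf, hxc⟩
    rw [sigmaSet, mem_setOf_eq, hφsupp x]
    refine ⟨hFfin.union (hxf.image _), ?_⟩
    calc ((↑F : Set Γ) ∪ _).ncard ≤ (↑F : Set Γ).ncard + _ := ncard_union_le _ _
      _ ≤ (n - 1) + 1 := by
          gcongr
          · rw [ncard_coe_finset, hFcard]
          · exact (ncard_image_le hxf).trans hxc
      _ = n := by omega
  set C : Set (sigmaSet Γ n) := {y | ∀ γ ∈ F, (y : Γ → Bool) γ = true} with hC
  have hval : ∀ a : Γ, (e a : Γ) ∉ F := fun a => (e a).2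
  -- inverse direction
  have hinv : ∀ y : sigmaSet Γ n, y ∈ C → (fun a => (y : Γ → Bool) (e a)) ∈ sigmaSet Γ 1 := by
    rintro ⟨y, hyf, hyc⟩ hy
    have hsub : (↑F : Set Γ) ⊆ {γ | y γ = true} := fun γ hγ => hy γ hγ
    have hdiff : ({γ | y γ = true} \ ↑F).ncard ≤ 1 := by
      rw [ncard_diff hsub hFfin]
      have := ncard_le_ncard hsub hyf
      rw [ncard_coe_finset, hFcard] at this ⊢
      omega
    have himg : (fun a => (e a : Γ)) '' {a | y (e a) = true} ⊆ {γ | y γ = true} \ ↑F := by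
      rintro _ ⟨a, ha, rfl⟩
      exact ⟨ha, hval a⟩
    have hinj : Function.Injective (fun a : Γ => (e a : Γ)) :=
      Subtype.val_injective.comp e.injective
    have hfin : {a | y (e a) = true}.Finite := by
      have : {a | y (e a) = true} = (fun a : Γ => (e a : Γ)) ⁻¹' {γ | y γ = true} := rfl
      rw [this]
      exact Set.Finite.preimage hinj.injOn hyf
    refine ⟨hfin, ?_⟩
    calc {a | y (e a) = true}.ncard
        = ((fun a => (e a : Γ)) '' {a | y (e a) = true}).ncard :=
          (ncard_image_of_injective _ hinj).symm
      _ ≤ ({γ | y γ = true} \ ↑F).ncard := ncard_le_ncard himg hyf.diff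
      _ ≤ 1 := hdiff
  refine ⟨C, ?_, ?_, ?_⟩
  · have : C = ⋂ γ ∈ F, {y : sigmaSet Γ n | (y : Γ → Bool) γ = true} := by
      ext y; simp [hC]
    rw [this]
    refine isClopen_biInter_finset fun γ _ => ?_
    have : Continuous fun y : sigmaSet Γ n => (y : Γ → Bool) γ :=
      (continuous_apply γ).comp continuous_subtype_val
    exact (isClopen_discrete {true}).preimage this
  · -- nonempty: image of the empty set
    have h0 : (fun _ : Γ => false) ∈ sigmaSet Γ 1 := by
      constructor <;> simp [sigmaSet]
    refine ⟨⟨φ (fun _ => false), hφmem _ h0⟩, fun γ hγ => ?_⟩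
    simp [hφ, hγ]
  · -- the homeomorphism
    refine ⟨Homeomorph.mk ⟨?_, ?_, ?_, ?_⟩ ?_ ?_⟩
    · exact fun x => ⟨⟨φ x, hφmem x x.2⟩, fun γ hγ => by simp [hφ, hγ]⟩
    · exact fun y => ⟨fun a => (y.1 : Γ → Bool) (e a), hinv y.1 y.2⟩
    · -- left inverse
      rintro ⟨x, hx⟩
      ext a
      have h1 : (e a : Γ) ∉ F := hval a
      simp only [hφ, h1, dif_neg, not_false_iff]
      exact congrArg x (e.symm_apply_apply a)
    · -- right inverse
      rintro ⟨⟨y, hy⟩, hyC⟩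
      ext γ
      by_cases h : γ ∈ F
      · simpa [hφ, h] using (hyC γ h).symm
      · simp only [hφ, h, dif_neg, not_false_iff]
        congr 1
        exact congrArg Subtype.val (e.apply_symm_apply ⟨γ, h⟩)
    · -- continuity of toFun
      refine Continuous.subtype_mk (Continuous.subtype_mk ?_ _) _
      refine continuous_pi fun γ => ?_
      by_cases h : γ ∈ F
      · simp only [hφ, h, dif_pos]; exact continuous_const
      · simp only [hφ, h, dif_neg, not_false_iff]
        exact (continuous_apply _).comp continuous_subtype_val
    · -- continuity of invFun
      refine Continuous.subtype_mk (continuous_pi fun a => ?_) _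
      exact (continuous_apply ((e a : Γ))).comp
        (continuous_subtype_val.comp continuous_subtype_val)

/-- `σ_1(Γ)` is homeomorphic to a clopen subset of `σ_n(Γ)` (for `n ≥ 1`); consequently
`σ_1(Γ)^ω` is homeomorphic to a retract of `∏_{i<ω} σ_{k_i}(Γ)` for any sequence of
positive integers `(k_i)`. -/
theorem stmt_17 (Γ : Type*) [Infinite Γ] (n : ℕ) (hn : 1 ≤ n) (kseq : ℕ → ℕ)
    (hk : ∀ i, 0 < kseq i) :
    (∃ C : Set (sigmaSet Γ n), IsClopen C ∧ Nonempty ((sigmaSet Γ 1) ≃ₜ C)) ∧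
    (∃ (A : Set (∀ i : ℕ, sigmaSet Γ (kseq i)))
       (r : (∀ i : ℕ, sigmaSet Γ (kseq i)) → (∀ i : ℕ, sigmaSet Γ (kseq i))),
        Continuous r ∧ Set.range r = A ∧ (∀ a ∈ A, r a = a) ∧
        Nonempty ((ℕ → (sigmaSet Γ 1)) ≃ₜ A)) := by
  classical
  constructor
  · obtain ⟨C, h1, _, h3⟩ := sigmaSet_clopen_copy Γ n hn
    exact ⟨C, h1, h3⟩
  · choose C hCclopen hCne hChomeo using
      fun i => sigmaSet_clopen_copy Γ (kseq i) (hk i)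
    choose c hc using hCne
    set A : Set (∀ i : ℕ, sigmaSet Γ (kseq i)) := {y | ∀ i, y i ∈ C i} with hA
    set r : (∀ i : ℕ, sigmaSet Γ (kseq i)) → (∀ i : ℕ, sigmaSet Γ (kseq i)) :=
      fun y i => if y i ∈ C i then y i else c i with hr
    have hrange : Set.range r = A := by
      apply subset_antisymm
      · rintro _ ⟨y, rfl⟩ i
        by_cases h : y i ∈ C i
        · simp only [hr, if_pos h]; exact h
        · simp only [hr, if_neg h]; exact hc i
      · intro a ha
        exact ⟨a, funext fun i => by simp [hr, ha i]⟩
    refine ⟨A, r, ?_, hrange, ?_, ?_⟩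
    · refine continuous_pi fun i => ?_
      have hcont : Continuous fun z : sigmaSet Γ (kseq i) =>
          if z ∈ C i then z else c i := by
        refine Continuous.if ?_ continuous_id continuous_const
        intro z hz
        simp only [Set.setOf_mem_eq, (hCclopen i).frontier_eq] at hz
        exact absurd hz (notMem_empty _)
      exact hcont.comp (continuous_apply i)
    · intro a ha
      exact funext fun i => by simp [hr, ha i]
    · -- homeomorphism
      obtain h := fun i => (hChomeo i).some
      refine ⟨(Homeomorph.piCongrRight h).trans (Homeomorph.mk ⟨?_, ?_, ?_, ?_⟩ ?_ ?_)⟩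
      · exact fun g => ⟨fun i => (g i : sigmaSet Γ (kseq i)), fun i => (g i).2⟩
      · exact fun y => fun i => ⟨y.1 i, y.2 i⟩
      · intro g; rfl
      · intro y; rfl
      · exact Continuous.subtype_mk
          (continuous_pi fun i => continuous_subtype_val.comp (continuous_apply i)) _
      · exact continuous_pi fun i => Continuous.subtype_mk
          ((continuous_apply i).comp continuous_subtype_val) _
end
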